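/- Let n ≥ 1 be an integer, let x and y be valid Fibonacci representations, and let a, b ∈ {0,1}. If [y] − n[x] ≤ −n−1, then [yb] − n[xa] ≤ −n−1. -/

import Mathlib

/-- The Fibonacci (Zeckendorf) value of a binary word written msd-first:
`[x₁⋯x_ℓ] = Σ_j x_j · F_{ℓ−j+2}`. -/
def fibVal : List Bool → ℕ
  | [] => 0
  | a :: rest => (if a then Nat.fib (rest.length + 2) else 0) + fibVal rest

/-- A binary word is a valid Fibonacci representation if it has no factor `11`. -/
def ValidFib (w : List Bool) : Prop :=
  w.Chain' (fun a b => a = false ∨ b = false)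

/-- The numerical value of a single bit. -/
def bitVal (a : Bool) : ℤ := if a then 1 else 0

/-- The value of a word with all Fibonacci weights shifted down by one
(rightmost bit has weight `F₁`). -/
def tVal : List Bool → ℕ
  | [] => 0
  | a :: rest => (if a then Nat.fib (rest.length + 1) else 0) + tVal rest

lemma fibVal_append (w : List Bool) (b : Bool) :
    fibVal (w ++ [b]) = fibVal w + tVal w + (if b then 1 else 0) := by
  induction w with
  | nil => cases b <;> simp [fibVal, tVal]
  | cons c w ih =>
    simp only [List.cons_append, fibVal, tVal, List.length_append,
      List.length_singleton, List.append_eq]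
    rw [ih, show w.length + 1 + 2 = (w.length + 1) + 2 from rfl,
      Nat.fib_add_two (n := w.length + 1),
      show w.length + 1 + 1 = w.length + 2 from rfl]
    cases c <;> simp <;> omega

lemma tVal_append (w : List Bool) (b : Bool) :
    tVal (w ++ [b]) = fibVal w + (if b then 1 else 0) := by
  induction w with
  | nil => cases b <;> simp [fibVal, tVal]
  | cons c w ih =>
    simp only [List.cons_append, fibVal, tVal, List.length_append,
      List.length_singleton, List.append_eq]
    rw [ih, show w.length + 1 + 1 = w.length + 2 from rfl]
    cases c <;> simp <;> omega

open goldenRatio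

lemma gold_inv_aux (v : List Bool) :
    φ * tVal v.reverse < fibVal v.reverse + 1 ∧
      (fibVal v.reverse : ℝ) + 1 < φ * (tVal v.reverse + 1) := by
  have h1 : (1:ℝ) < φ := Real.one_lt_goldenRatio
  have h2 : φ ^ 2 = φ + 1 := Real.goldenRatio_sq
  induction v with
  | nil => simp [fibVal, tVal]; linarith
  | cons b v ih =>
    obtain ⟨i1, i2⟩ := ih
    rw [List.reverse_cons, fibVal_append, tVal_append]
    set m := (fibVal v.reverse : ℝ)
    set t := (tVal v.reverse : ℝ)
    have hm : ((fibVal v.reverse + tVal v.reverse + (if b then 1 else 0) : ℕ) : ℝ)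
        = m + t + (if b then 1 else 0) := by push_cast; cases b <;> simp [m, t]
    have ht : ((fibVal v.reverse + (if b then 1 else 0) : ℕ) : ℝ)
        = m + (if b then 1 else 0) := by push_cast; cases b <;> simp [m]
    rw [hm, ht]
    cases b <;> simp only [if_true, if_false, Bool.false_eq_true] <;>
      constructor <;> nlinarith

lemma gold_inv (w : List Bool) :
    φ * tVal w < fibVal w + 1 ∧ (fibVal w : ℝ) + 1 < φ * (tVal w + 1) := by
  have := gold_inv_aux w.reverse
  rwa [List.reverse_reverse] at this

theorem diff_stays_low (n : ℕ) (hn : 1 ≤ n) (x y : List Bool)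
    (hx : ValidFib x) (hy : ValidFib y) (a b : Bool)
    (h : (fibVal y : ℤ) - n * fibVal x ≤ -(n : ℤ) - 1) :
    (fibVal (y ++ [b]) : ℤ) - n * fibVal (x ++ [a]) ≤ -(n : ℤ) - 1 := by
  rw [fibVal_append, fibVal_append]
  obtain ⟨hx1, hx2⟩ := gold_inv x
  obtain ⟨hy1, hy2⟩ := gold_inv y
  have h1 : (1:ℝ) < φ := Real.one_lt_goldenRatio
  have h32 : (3:ℝ)/2 < φ := by
    have h5 : (2:ℝ) < Real.sqrt 5 := by
      rw [show (2:ℝ) = Real.sqrt 4 by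
        rw [show (4:ℝ) = 2^2 by norm_num, Real.sqrt_sq (by norm_num)]]
      exact Real.sqrt_lt_sqrt (by norm_num) (by norm_num)
    rw [Real.goldenRatio]; linarith
  have h2 : φ ^ 2 = φ + 1 := Real.goldenRatio_sq
  have hnR : (1:ℝ) ≤ n := by exact_mod_cast hn
  have hR : ((fibVal y : ℝ) + tVal y + (if b then 1 else 0))
      - n * ((fibVal x : ℝ) + tVal x + (if a then 1 else 0)) < -(n:ℝ) := by
    have hhR : (fibVal y : ℝ) - n * fibVal x ≤ -(n:ℝ) - 1 := by exact_mod_cast h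
    have hb : ((if b then 1 else 0 : ℝ)) ≤ 1 := by cases b <;> norm_num
    have ha : (0:ℝ) ≤ (if a then 1 else 0 : ℝ) := by cases a <;> norm_num
    have key : φ * ((tVal y : ℝ) - n * tVal x) < n * φ - 2 * n := by nlinarith
    have key2 : (tVal y : ℝ) - n * tVal x < 3 * n - 2 * n * φ := by nlinarith
    nlinarith
  have hZ : ((fibVal y + tVal y + (if b then 1 else 0) : ℕ) : ℤ)
      - n * ((fibVal x + tVal x + (if a then 1 else 0) : ℕ) : ℤ) < -(n : ℤ) := by
    have : (((fibVal y + tVal y + (if b then 1 else 0) : ℕ) : ℤ)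
        - n * ((fibVal x + tVal x + (if a then 1 else 0) : ℕ) : ℤ) : ℝ) < -(n:ℝ) := by
      push_cast
      cases a <;> cases b <;> simpa using hR
    exact_mod_cast this
  omega
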